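/- Let f: P → Q be a C-functor of C-directed complexes and U ⊆ P a molecule. Then f(U) is a molecule of the same dimension as U, ∂^α f(U) = f(∂^α U), and if U decomposes as U₁ #ₖ U₂ then f(U) decomposes as f(U₁) #ₖ f(U₂). -/

import Mathlib

/-- An oriented graded poset: a finite graded poset together with an
orientation (edge-labelling of the Hasse diagram in `Bool`, `true` = `+`,
`false` = `-`).  `orient y x` is the label of the edge `y → x` when `x ⋖ y`. -/
structure OGP where
  carrier : Type
  [po : PartialOrder carrier]
  [fin : Finite carrier]
  dim : carrier → ℕ
  graded : ∀ x y : carrier, x ⋖ y → dim y = dim x + 1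
  min_dim : ∀ x : carrier, IsMin x → dim x = 0
  orient : carrier → carrier → Bool

attribute [instance] OGP.po OGP.fin

namespace OGP

variable (P : OGP)

/-- Downward closure of a subset. -/
def cl (U : Set P.carrier) : Set P.carrier := {x | ∃ y ∈ U, x ≤ y}

/-- A subset is closed if it is downward closed. -/
def IsClosed (U : Set P.carrier) : Prop := P.cl U ⊆ U

/-- `Δₙ^α U`: the `n`-dimensional elements of `U` all of whose covering
elements in `U` cover with sign `α`. -/
def sb (n : ℕ) (α : Bool) (U : Set P.carrier) : Set P.carrier :=
  {x | x ∈ U ∧ P.dim x = n ∧ ∀ y ∈ U, x ⋖ y → P.orient y x = α}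

/-- The boundary `∂ₙ^α U`. -/
def bd (n : ℕ) (α : Bool) (U : Set P.carrier) : Set P.carrier :=
  P.cl (P.sb n α U) ∪ {x | x ∈ U ∧ ∀ y ∈ U, x ≤ y → P.dim y ≤ n}

/-- Dimension of a subset (the maximum of the dimensions of its elements;
`0` if empty). -/
noncomputable def sdim (U : Set P.carrier) : ℕ := sSup (P.dim '' U)

end OGP

/-- A map of oriented graded posets: a function commuting with all boundary
operators `∂ₙ^α` on closures of points. -/
def IsMap (P Q : OGP) (f : P.carrier → Q.carrier) : Prop :=
  ∀ (x : P.carrier) (n : ℕ) (α : Bool),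
    Q.bd n α (Q.cl {f x}) = f '' (P.bd n α (P.cl {x}))

/-- Molecules in an oriented graded poset, defined inductively: atoms
(closed subsets with a greatest element), and pastings `U₁ ∪ U₂` of two
molecules properly contained in the union with
`U₁ ∩ U₂ = ∂ₖ^+ U₁ = ∂ₖ^- U₂`. -/
inductive IsMolecule (P : OGP) : Set P.carrier → Prop
  | atom : ∀ U : Set P.carrier, P.IsClosed U → (∃ x ∈ U, ∀ y ∈ U, y ≤ x) →
      IsMolecule P U
  | paste : ∀ (U₁ U₂ : Set P.carrier) (k : ℕ),
      IsMolecule P U₁ → IsMolecule P U₂ →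
      U₁ ∩ U₂ = P.bd k true U₁ → U₁ ∩ U₂ = P.bd k false U₂ →
      U₁ ≠ U₁ ∪ U₂ → U₂ ≠ U₁ ∪ U₂ →
      IsMolecule P (U₁ ∪ U₂)

/-- `∂^α x`: the boundary of the closure of a single element. -/
def OGP.bdx (P : OGP) (α : Bool) (x : P.carrier) : Set P.carrier :=
  P.bd (P.dim x - 1) α (P.cl {x})

/-- A directed complex: every `∂^α x` is a molecule, and globularity holds. -/
def IsDirectedComplex (P : OGP) : Prop :=
  ∀ (x : P.carrier) (α : Bool),
    IsMolecule P (P.bdx α x) ∧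
    (1 < P.dim x → ∀ β : Bool,
      P.bd (P.dim x - 2) α (P.bdx β x) = P.bd (P.dim x - 2) α (P.cl {x}))

/-- An `n`-molecule `U` has spherical boundary iff for all `k < n`,
`∂ₖ^+ U ∩ ∂ₖ^- U = ∂ₖ₋₁ U` (for `k = 0` the right-hand side is empty). -/
def HasSphericalBoundary (P : OGP) (n : ℕ) (U : Set P.carrier) : Prop :=
  (∀ k : ℕ, 0 < k → k < n →
      P.bd k true U ∩ P.bd k false U = P.bd (k - 1) true U ∪ P.bd (k - 1) false U) ∧
  (0 < n → P.bd 0 true U ∩ P.bd 0 false U = ∅)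

/-- A regular directed complex: a directed complex all of whose atoms have
spherical boundary. -/
def IsRegularDC (P : OGP) : Prop :=
  IsDirectedComplex P ∧ ∀ x : P.carrier, HasSphericalBoundary P (P.dim x) (P.cl {x})

/-- A `C`-functor between directed complexes: a function on closed subsets
preserving unions and binary intersections, commuting with boundaries of
atoms, and sending atoms to `C`-molecules. -/
structure CFun (P Q : OGP) (C : Set Q.carrier → Prop) where
  toFun : Set P.carrier → Set Q.carrier
  map_unions : ∀ S : Set (Set P.carrier), (∀ U ∈ S, P.IsClosed U) →
    toFun (⋃₀ S) = ⋃₀ (toFun '' S)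
  map_inter : ∀ U V : Set P.carrier, P.IsClosed U → P.IsClosed V →
    toFun (U ∩ V) = toFun U ∩ toFun V
  map_bd : ∀ (x : P.carrier) (n : ℕ) (α : Bool),
    Q.bd n α (toFun (P.cl {x})) = toFun (P.bd n α (P.cl {x}))
  atom_mol : ∀ x : P.carrier,
    IsMolecule Q (toFun (P.cl {x})) ∧ C (toFun (P.cl {x}))



/-! ## Auxiliary development -/

namespace OGP

variable {P : OGP}

/-! ### closure -/

lemma mem_cl {U : Set P.carrier} {x : P.carrier} : x ∈ P.cl U ↔ ∃ y ∈ U, x ≤ y := Iff.rfl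

lemma subset_cl (U : Set P.carrier) : U ⊆ P.cl U := fun x hx => ⟨x, hx, le_rfl⟩

lemma cl_mono {U V : Set P.carrier} (h : U ⊆ V) : P.cl U ⊆ P.cl V :=
  fun x ⟨y, hy, hxy⟩ => ⟨y, h hy, hxy⟩

lemma isClosed_cl (U : Set P.carrier) : P.IsClosed (P.cl U) :=
  fun x ⟨y, ⟨z, hz, hyz⟩, hxy⟩ => ⟨z, hz, le_trans hxy hyz⟩

lemma IsClosed.mem_of_le {U : Set P.carrier} (hU : P.IsClosed U) {x y : P.carrier}
    (h : x ≤ y) (hy : y ∈ U) : x ∈ U := hU ⟨y, hy, h⟩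

lemma IsClosed.union {U V : Set P.carrier} (hU : P.IsClosed U) (hV : P.IsClosed V) :
    P.IsClosed (U ∪ V) := fun x ⟨y, hy, hxy⟩ =>
  hy.elim (fun h => Or.inl (hU.mem_of_le hxy h)) (fun h => Or.inr (hV.mem_of_le hxy h))

lemma IsClosed.inter {U V : Set P.carrier} (hU : P.IsClosed U) (hV : P.IsClosed V) :
    P.IsClosed (U ∩ V) := fun x ⟨y, hy, hxy⟩ =>
  ⟨hU.mem_of_le hxy hy.1, hV.mem_of_le hxy hy.2⟩

lemma isClosed_empty : P.IsClosed (∅ : Set P.carrier) := fun x ⟨y, hy, _⟩ => hy.elim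

lemma mem_cl_singleton {x y : P.carrier} : x ∈ P.cl {y} ↔ x ≤ y := by
  constructor
  · rintro ⟨z, hz, hxz⟩; simp only [Set.mem_singleton_iff] at hz; exact hz ▸ hxz
  · intro h; exact ⟨y, rfl, h⟩

lemma isClosed_cl_singleton (x : P.carrier) : P.IsClosed (P.cl {x}) := isClosed_cl _

lemma self_mem_cl_singleton (x : P.carrier) : x ∈ P.cl {x} := mem_cl_singleton.2 le_rfl

/-! ### dimension -/

lemma transGen_covBy_of_lt : ∀ (y x : P.carrier), x < y → Relation.TransGen (· ⋖ ·) x y := by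
  intro y
  refine wellFounded_lt.induction
    (C := fun y => ∀ x, x < y → Relation.TransGen (· ⋖ ·) x y) y ?_
  intro y IH x hxy
  obtain ⟨z, hz, hzmax⟩ := Set.Finite.exists_maximalFor id {w | x ≤ w ∧ w < y}
    (Set.toFinite _) ⟨x, le_rfl, hxy⟩
  have hcov : z ⋖ y := by
    refine ⟨hz.2, fun w hzw hwy => ?_⟩
    exact absurd (hzmax ⟨hz.1.trans hzw.le, hwy⟩ hzw.le) hzw.not_ge
  rcases eq_or_lt_of_le hz.1 with rfl | hxz
  · exact Relation.TransGen.single hcov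
  · exact (IH z hz.2 x hxz).tail hcov

lemma dim_lt_of_lt {x y : P.carrier} (h : x < y) : P.dim x < P.dim y := by
  have key : ∀ {a b : P.carrier}, Relation.TransGen (· ⋖ ·) a b → P.dim a < P.dim b := by
    intro a b h'
    induction h' with
    | single h'' => have := P.graded _ _ h''; omega
    | tail hab h'' ih => have := P.graded _ _ h''; omega
  exact key (transGen_covBy_of_lt y x h)

lemma dim_le_of_le {x y : P.carrier} (h : x ≤ y) : P.dim x ≤ P.dim y := by
  rcases eq_or_lt_of_le h with rfl | h'
  · exact le_rfl
  · exact (dim_lt_of_lt h').le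

lemma eq_of_le_of_dim_le {x y : P.carrier} (h : x ≤ y) (hd : P.dim y ≤ P.dim x) : x = y := by
  rcases eq_or_lt_of_le h with rfl | h'
  · rfl
  · exact absurd (dim_lt_of_lt h') (by omega)

lemma covBy_of_lt_of_dim {x y : P.carrier} (h : x < y) (hd : P.dim y = P.dim x + 1) :
    x ⋖ y := by
  refine ⟨h, fun w hw hwy => ?_⟩
  have h1 := dim_lt_of_lt hw
  have h2 := dim_lt_of_lt hwy
  omega

/-! ### sdim -/

lemma bddAbove_dim_image (U : Set P.carrier) : BddAbove (P.dim '' U) :=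
  (Set.toFinite _).bddAbove

lemma dim_le_sdim {U : Set P.carrier} {x : P.carrier} (hx : x ∈ U) : P.dim x ≤ P.sdim U :=
  le_csSup (bddAbove_dim_image U) ⟨x, hx, rfl⟩

lemma sdim_le {U : Set P.carrier} {n : ℕ} (h : ∀ x ∈ U, P.dim x ≤ n) : P.sdim U ≤ n := by
  rcases U.eq_empty_or_nonempty with rfl | hne
  · simp [sdim, csSup_empty]
  · exact csSup_le (hne.image _) (by rintro b ⟨x, hx, rfl⟩; exact h x hx)

lemma exists_dim_eq_sdim {U : Set P.carrier} (hU : U.Nonempty) :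
    ∃ x ∈ U, P.dim x = P.sdim U := by
  have := Nat.sSup_mem (hU.image P.dim) (bddAbove_dim_image U)
  obtain ⟨x, hx, hdx⟩ := this
  exact ⟨x, hx, hdx⟩

lemma sdim_mono {U V : Set P.carrier} (h : U ⊆ V) : P.sdim U ≤ P.sdim V :=
  sdim_le fun x hx => dim_le_sdim (h hx)

lemma sdim_union (U V : Set P.carrier) : P.sdim (U ∪ V) = max (P.sdim U) (P.sdim V) := by
  refine le_antisymm (sdim_le fun x hx => ?_)
    (max_le (sdim_mono Set.subset_union_left) (sdim_mono Set.subset_union_right))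
  rcases hx with h | h
  · exact le_max_of_le_left (dim_le_sdim h)
  · exact le_max_of_le_right (dim_le_sdim h)

lemma sdim_cl_singleton (x : P.carrier) : P.sdim (P.cl {x}) = P.dim x := by
  refine le_antisymm (sdim_le fun y hy => dim_le_of_le (mem_cl_singleton.1 hy)) ?_
  exact dim_le_sdim (self_mem_cl_singleton x)

/-! ### boundaries: basic facts -/

lemma sb_subset {n : ℕ} {α : Bool} {U : Set P.carrier} : P.sb n α U ⊆ U := fun _ hx => hx.1

lemma mem_bd_iff {n : ℕ} {α : Bool} {U : Set P.carrier} {x : P.carrier} :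
    x ∈ P.bd n α U ↔ (∃ z ∈ P.sb n α U, x ≤ z) ∨
      (x ∈ U ∧ ∀ y ∈ U, x ≤ y → P.dim y ≤ n) := Iff.rfl

lemma sb_subset_bd {n : ℕ} {α : Bool} {U : Set P.carrier} : P.sb n α U ⊆ P.bd n α U :=
  fun z hz => Or.inl ⟨z, hz, le_rfl⟩

lemma bd_subset {n : ℕ} {α : Bool} {U : Set P.carrier} (hU : P.IsClosed U) :
    P.bd n α U ⊆ U := by
  rintro x (⟨z, hz, hxz⟩ | h)
  · exact hU.mem_of_le hxz hz.1
  · exact h.1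

lemma dim_le_of_mem_bd {n : ℕ} {α : Bool} {U : Set P.carrier} {x : P.carrier}
    (hx : x ∈ P.bd n α U) : P.dim x ≤ n := by
  rcases hx with ⟨z, hz, hxz⟩ | h
  · exact (dim_le_of_le hxz).trans hz.2.1.le
  · exact h.2 x h.1 le_rfl

lemma sdim_bd_le {n : ℕ} {α : Bool} {U : Set P.carrier} : P.sdim (P.bd n α U) ≤ n :=
  sdim_le fun _ hx => dim_le_of_mem_bd hx

lemma bd_eq_self {n : ℕ} {α : Bool} {U : Set P.carrier} (hU : P.IsClosed U)
    (h : P.sdim U ≤ n) : P.bd n α U = U := by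
  refine subset_antisymm (bd_subset hU) (fun x hx => Or.inr ⟨hx, fun y hy _ => ?_⟩)
  exact (dim_le_sdim hy).trans h

/-- If every element of `U` is below an element of dimension `> n`, then the
second ("maximal") part of the boundary is empty. -/
lemma bd_eq_cl_sb {n : ℕ} {α : Bool} {U : Set P.carrier}
    (h : ∀ t ∈ U, ∃ u ∈ U, t ≤ u ∧ n < P.dim u) :
    P.bd n α U = P.cl (P.sb n α U) := by
  refine subset_antisymm ?_ Set.subset_union_left
  rintro x (hx | ⟨hxU, hM⟩)
  · exact hx
  · obtain ⟨u, hu, hxu, hdu⟩ := h x hxU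
    exact absurd (hM u hu hxu) (by omega)

lemma mem_sb_of_mem_bd_of_dim {n : ℕ} {α : Bool} {U : Set P.carrier} {x : P.carrier}
    (hx : x ∈ P.bd n α U) (hd : P.dim x = n) :
    x ∈ P.sb n α U ∨ (x ∈ U ∧ ∀ y ∈ U, x ≤ y → P.dim y ≤ n) := by
  rcases hx with ⟨z, hz, hxz⟩ | h
  · left
    have h1 : P.dim z = n := hz.2.1
    have h2 : x = z := eq_of_le_of_dim_le hxz (by omega)
    rwa [h2]
  · right; exact h

lemma isClosed_bd_of_cl_sb {n : ℕ} {α : Bool} {U : Set P.carrier}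
    (h : ∀ t ∈ U, ∃ u ∈ U, t ≤ u ∧ n < P.dim u) : P.IsClosed (P.bd n α U) := by
  rw [bd_eq_cl_sb h]; exact isClosed_cl _

end OGP

/-! ### molecules: basic facts -/

lemma IsMolecule.closed {P : OGP} {U : Set P.carrier} (h : IsMolecule P U) : P.IsClosed U := by
  induction h with
  | atom U hcl _ => exact hcl
  | paste U₁ U₂ k _ _ _ _ _ _ ih1 ih2 => exact ih1.union ih2

lemma IsMolecule.nonempty {P : OGP} {U : Set P.carrier} (h : IsMolecule P U) : U.Nonempty := by
  induction h with
  | atom U _ hg => obtain ⟨x, hx, _⟩ := hg; exact ⟨x, hx⟩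
  | paste U₁ U₂ k _ _ _ _ _ _ ih1 ih2 => exact ih1.mono Set.subset_union_left

/-! ### the strengthened invariant `Sat` -/

/-- The invariant carried through the induction on molecules: a molecule all
of whose (iterated) boundaries are again molecules, satisfying globularity. -/
inductive Sat (P : OGP) : Set P.carrier → Prop
  | mk (U : Set P.carrier) (mol : IsMolecule P U)
      (child : ∀ (n : ℕ) (α : Bool), n < P.sdim U → Sat P (P.bd n α U))
      (glob : ∀ (n m : ℕ) (α β : Bool), n < m →
        P.bd n α (P.bd m β U) = P.bd n α U) : Sat P U

namespace Sat

variable {P : OGP} {U : Set P.carrier}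

lemma mol (h : Sat P U) : IsMolecule P U := by cases h with | mk _ m _ _ => exact m

lemma closed (h : Sat P U) : P.IsClosed U := h.mol.closed

lemma nonempty (h : Sat P U) : U.Nonempty := h.mol.nonempty

lemma glob (h : Sat P U) : ∀ (n m : ℕ) (α β : Bool), n < m →
    P.bd n α (P.bd m β U) = P.bd n α U := by
  cases h with | mk _ _ _ g => exact g

lemma bd_sat (h : Sat P U) (n : ℕ) (α : Bool) : Sat P (P.bd n α U) := by
  rcases lt_or_ge n (P.sdim U) with hn | hn
  · cases h with | mk _ _ c _ => exact c n α hn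
  · rw [OGP.bd_eq_self h.closed hn]; exact h

lemma bd_mol (h : Sat P U) (n : ℕ) (α : Bool) : IsMolecule P (P.bd n α U) :=
  (h.bd_sat n α).mol

lemma bd_closed (h : Sat P U) (n : ℕ) (α : Bool) : P.IsClosed (P.bd n α U) :=
  (h.bd_sat n α).closed

lemma bd_subset_bd (h : Sat P U) {n m : ℕ} (hnm : n < m) (α β : Bool) :
    P.bd n α U ⊆ P.bd m β U := by
  rw [← h.glob n m α β hnm]
  exact OGP.bd_subset (h.bd_closed m β)

end Sat

/-! ### boundaries of pastings -/

section Paste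

variable {P : OGP} {U₁ U₂ : Set P.carrier} {k : ℕ}

/-- `∂ₙ^α (U₁ ∪ U₂) = ∂ₙ^α U₁ ∪ ∂ₙ^α U₂` for `n > k`. -/
lemma pasteB1 (h1 : Sat P U₁) (h2 : Sat P U₂)
    (hW1 : U₁ ∩ U₂ = P.bd k true U₁) (hW2 : U₁ ∩ U₂ = P.bd k false U₂)
    {n : ℕ} (hk : k < n) (α : Bool) :
    P.bd n α (U₁ ∪ U₂) = P.bd n α U₁ ∪ P.bd n α U₂ := by
  have hc1 := h1.closed
  have hc2 := h2.closed
  have hnotW : ∀ z, P.dim z = n → z ∈ U₁ → z ∈ U₂ → False := fun z hd hz1 hz2 => by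
    have h := OGP.dim_le_of_mem_bd (show z ∈ P.bd k true U₁ by rw [← hW1]; exact ⟨hz1, hz2⟩)
    omega
  have hsb1 : P.sb n α U₁ ⊆ P.sb n α (U₁ ∪ U₂) := by
    rintro z ⟨hzU, hzd, hzc⟩
    refine ⟨Or.inl hzU, hzd, fun w hw hcov => ?_⟩
    rcases hw with hw | hw
    · exact hzc w hw hcov
    · exact (hnotW z hzd hzU (hc2.mem_of_le hcov.le hw)).elim
  have hsb2 : P.sb n α U₂ ⊆ P.sb n α (U₁ ∪ U₂) := by
    rintro z ⟨hzU, hzd, hzc⟩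
    refine ⟨Or.inr hzU, hzd, fun w hw hcov => ?_⟩
    rcases hw with hw | hw
    · exact (hnotW z hzd (hc1.mem_of_le hcov.le hw) hzU).elim
    · exact hzc w hw hcov
  have hM1 : ∀ x, x ∈ U₁ → (∀ y ∈ U₁, x ≤ y → P.dim y ≤ n) → x ∈ P.bd n α (U₁ ∪ U₂) := by
    intro x hx1 hMx
    by_cases hx2 : x ∈ U₂
    · by_cases htall : ∀ y ∈ U₂, x ≤ y → P.dim y ≤ n
      · exact Or.inr ⟨Or.inl hx1, fun y hy hxy =>
          hy.elim (fun h => hMx y h hxy) (fun h => htall y h hxy)⟩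
      · have hxW : x ∈ P.bd n α U₂ := by
          refine h2.bd_subset_bd hk false α ?_
          rw [← hW2]; exact ⟨hx1, hx2⟩
        rcases hxW with ⟨z, hz, hxz⟩ | hM2
        · refine Or.inl ⟨z, ⟨Or.inr hz.1, hz.2.1, fun w hw hcov => ?_⟩, hxz⟩
          rcases hw with hw | hw
          · exact (hnotW z hz.2.1 (hc1.mem_of_le hcov.le hw) hz.1).elim
          · exact hz.2.2 w hw hcov
        · exact absurd (fun y hy hxy => hM2.2 y hy hxy) htall
    · refine Or.inr ⟨Or.inl hx1, fun y hy hxy => ?_⟩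
      rcases hy with hy | hy
      · exact hMx y hy hxy
      · exact absurd (hc2.mem_of_le hxy hy) hx2
  have hM2 : ∀ x, x ∈ U₂ → (∀ y ∈ U₂, x ≤ y → P.dim y ≤ n) → x ∈ P.bd n α (U₁ ∪ U₂) := by
    intro x hx2 hMx
    by_cases hx1 : x ∈ U₁
    · by_cases htall : ∀ y ∈ U₁, x ≤ y → P.dim y ≤ n
      · exact Or.inr ⟨Or.inr hx2, fun y hy hxy =>
          hy.elim (fun h => htall y h hxy) (fun h => hMx y h hxy)⟩
      · have hxW : x ∈ P.bd n α U₁ := by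
          refine h1.bd_subset_bd hk true α ?_
          rw [← hW1]; exact ⟨hx1, hx2⟩
        rcases hxW with ⟨z, hz, hxz⟩ | hM1'
        · refine Or.inl ⟨z, ⟨Or.inl hz.1, hz.2.1, fun w hw hcov => ?_⟩, hxz⟩
          rcases hw with hw | hw
          · exact hz.2.2 w hw hcov
          · exact (hnotW z hz.2.1 hz.1 (hc2.mem_of_le hcov.le hw)).elim
        · exact absurd (fun y hy hxy => hM1'.2 y hy hxy) htall
    · refine Or.inr ⟨Or.inr hx2, fun y hy hxy => ?_⟩
      rcases hy with hy | hy
      · exact absurd (hc1.mem_of_le hxy hy) hx1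
      · exact hMx y hy hxy
  apply subset_antisymm
  · rintro x (⟨z, hz, hxz⟩ | ⟨hxU, hMx⟩)
    · rcases hz.1 with h | h
      · exact Or.inl (Or.inl ⟨z, ⟨h, hz.2.1, fun w hw hcov => hz.2.2 w (Or.inl hw) hcov⟩, hxz⟩)
      · exact Or.inr (Or.inl ⟨z, ⟨h, hz.2.1, fun w hw hcov => hz.2.2 w (Or.inr hw) hcov⟩, hxz⟩)
    · rcases hxU with hx | hx
      · exact Or.inl (Or.inr ⟨hx, fun y hy hxy => hMx y (Or.inl hy) hxy⟩)
      · exact Or.inr (Or.inr ⟨hx, fun y hy hxy => hMx y (Or.inr hy) hxy⟩)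
  · rintro x (hx | hx)
    · rcases hx with ⟨z, hz, hxz⟩ | ⟨hx1, hMx⟩
      · exact Or.inl ⟨z, hsb1 hz, hxz⟩
      · exact hM1 x hx1 hMx
    · rcases hx with ⟨z, hz, hxz⟩ | ⟨hx2, hMx⟩
      · exact Or.inl ⟨z, hsb2 hz, hxz⟩
      · exact hM2 x hx2 hMx

/-- `∂ₖ^γ (A ∪ B) = ∂ₖ^γ B` when `A ∩ B = ∂ₖ^γ A`. -/
lemma pasteB2 {A B : Set P.carrier} {γ : Bool} (hc1 : P.IsClosed A) (hc2 : P.IsClosed B)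
    (hWA : A ∩ B = P.bd k γ A) :
    P.bd k γ (A ∪ B) = P.bd k γ B := by
  apply subset_antisymm
  · rintro x (⟨z, hz, hxz⟩ | ⟨hxU, hMx⟩)
    · -- z ∈ sb k γ (A ∪ B)
      have hz2 : z ∈ B := by
        rcases hz.1 with hz1 | hz2
        · have hzW : z ∈ A ∩ B := by
            rw [hWA]
            exact OGP.sb_subset_bd ⟨hz1, hz.2.1, fun w hw hcov => hz.2.2 w (Or.inl hw) hcov⟩
          exact hzW.2
        · exact hz2
      exact Or.inl ⟨z, ⟨hz2, hz.2.1, fun w hw hcov => hz.2.2 w (Or.inr hw) hcov⟩, hxz⟩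
    · have hx2 : x ∈ B := by
        rcases hxU with hx1 | hx2
        · have hxW : x ∈ A ∩ B := by
            rw [hWA]
            exact Or.inr ⟨hx1, fun y hy hxy => hMx y (Or.inl hy) hxy⟩
          exact hxW.2
        · exact hx2
      exact Or.inr ⟨hx2, fun y hy hxy => hMx y (Or.inr hy) hxy⟩
  · rintro x (⟨z, hz, hxz⟩ | ⟨hx2, hMx⟩)
    · -- z ∈ sb k γ B
      refine Or.inl ⟨z, ⟨Or.inr hz.1, hz.2.1, fun w hw hcov => ?_⟩, hxz⟩
      rcases hw with hw1 | hw2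
      · have hz1 : z ∈ A := hc1.mem_of_le hcov.le hw1
        have hzW : z ∈ P.bd k γ A := by rw [← hWA]; exact ⟨hz1, hz.1⟩
        rcases OGP.mem_sb_of_mem_bd_of_dim hzW hz.2.1 with hsb | hM
        · exact hsb.2.2 w hw1 hcov
        · exact absurd (hM.2 w hw1 hcov.le) (by have hg := P.graded _ _ hcov; have hzd := hz.2.1; omega)
      · exact hz.2.2 w hw2 hcov
    · by_cases hx1 : x ∈ A
      · have hxW : x ∈ P.bd k γ A := by rw [← hWA]; exact ⟨hx1, hx2⟩
        rcases hxW with ⟨z, hz, hxz⟩ | hM1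
        · -- z ∈ sb k γ A, and z has no covers in B
          have hz2 : z ∈ B := by
            have : z ∈ A ∩ B := by rw [hWA]; exact OGP.sb_subset_bd hz
            exact this.2
          refine Or.inl ⟨z, ⟨Or.inl hz.1, hz.2.1, fun w hw hcov => ?_⟩, hxz⟩
          rcases hw with hw1 | hw2
          · exact hz.2.2 w hw1 hcov
          · exact absurd (hMx w hw2 (hxz.trans hcov.le))
              (by have := P.graded _ _ hcov; have := hz.2.1; omega)
        · exact Or.inr ⟨Or.inr hx2, fun y hy hxy =>
            hy.elim (fun h => hM1.2 y h hxy) (fun h => hMx y h hxy)⟩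
      · exact Or.inr ⟨Or.inr hx2, fun y hy hxy =>
          hy.elim (fun h => absurd (hc1.mem_of_le hxy h) hx1) (fun h => hMx y h hxy)⟩

lemma pasteB2' (h1 : Sat P U₁) (h2 : Sat P U₂)
    (hW1 : U₁ ∩ U₂ = P.bd k true U₁) (hW2 : U₁ ∩ U₂ = P.bd k false U₂) :
    P.bd k true (U₁ ∪ U₂) = P.bd k true U₂ :=
  pasteB2 h1.closed h2.closed hW1

lemma pasteB2neg (h1 : Sat P U₁) (h2 : Sat P U₂)
    (hW1 : U₁ ∩ U₂ = P.bd k true U₁) (hW2 : U₁ ∩ U₂ = P.bd k false U₂) :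
    P.bd k false (U₁ ∪ U₂) = P.bd k false U₁ := by
  rw [Set.union_comm]
  exact pasteB2 h2.closed h1.closed (by rw [Set.inter_comm]; exact hW2)

/-- For `n < k` the two low boundaries agree. -/
lemma pasteD (h1 : Sat P U₁) (h2 : Sat P U₂)
    (hW1 : U₁ ∩ U₂ = P.bd k true U₁) (hW2 : U₁ ∩ U₂ = P.bd k false U₂)
    {n : ℕ} (hn : n < k) (α : Bool) :
    P.bd n α U₁ = P.bd n α U₂ := by
  rw [← h1.glob n k α true hn, ← hW1, hW2, h2.glob n k α false hn]

lemma pasteB3 (h1 : Sat P U₁) (h2 : Sat P U₂)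
    (hW1 : U₁ ∩ U₂ = P.bd k true U₁) (hW2 : U₁ ∩ U₂ = P.bd k false U₂)
    {n : ℕ} (hn : n < k) (α : Bool) :
    P.bd n α (U₁ ∪ U₂) = P.bd n α U₁ := by
  have hc1 := h1.closed
  have hc2 := h2.closed
  have hD : P.bd n α U₁ = P.bd n α U₂ := pasteD h1 h2 hW1 hW2 hn α
  have hDclosed : P.IsClosed (P.bd n α U₁) := h1.bd_closed n α
  apply subset_antisymm
  · rintro x (⟨z, hz, hxz⟩ | ⟨hxU, hMx⟩)
    · have hzD : z ∈ P.bd n α U₁ := by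
        rcases hz.1 with hz1 | hz2
        · exact OGP.sb_subset_bd ⟨hz1, hz.2.1, fun w hw hcov => hz.2.2 w (Or.inl hw) hcov⟩
        · rw [hD]
          exact OGP.sb_subset_bd ⟨hz2, hz.2.1, fun w hw hcov => hz.2.2 w (Or.inr hw) hcov⟩
      exact hDclosed.mem_of_le hxz hzD
    · rcases hxU with hx1 | hx2
      · exact Or.inr ⟨hx1, fun y hy hxy => hMx y (Or.inl hy) hxy⟩
      · rw [hD]
        exact Or.inr ⟨hx2, fun y hy hxy => hMx y (Or.inr hy) hxy⟩
  · rintro t (⟨z, hz, htz⟩ | ⟨ht1, htM⟩)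
    · refine Or.inl ⟨z, ⟨Or.inl hz.1, hz.2.1, fun w hw hcov => ?_⟩, htz⟩
      rcases hw with hw1 | hw2
      · exact hz.2.2 w hw1 hcov
      · have hzD2 : z ∈ P.bd n α U₂ := by rw [← hD]; exact OGP.sb_subset_bd hz
        rcases OGP.mem_sb_of_mem_bd_of_dim hzD2 hz.2.1 with hsb | hM
        · exact hsb.2.2 w hw2 hcov
        · exact absurd (hM.2 w hw2 hcov.le) (by have hg := P.graded _ _ hcov; have hzd := hz.2.1; omega)
    · by_cases ht2 : t ∈ U₂
      · have htD2 : t ∈ P.bd n α U₂ := by rw [← hD]; exact Or.inr ⟨ht1, htM⟩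
        rcases htD2 with ⟨z, hz, htz⟩ | hM2
        · refine Or.inl ⟨z, ⟨Or.inr hz.1, hz.2.1, fun w hw hcov => ?_⟩, htz⟩
          rcases hw with hw1 | hw2
          · have hzD1 : z ∈ P.bd n α U₁ := by rw [hD]; exact OGP.sb_subset_bd hz
            rcases OGP.mem_sb_of_mem_bd_of_dim hzD1 hz.2.1 with hsb | hM
            · exact hsb.2.2 w hw1 hcov
            · exact absurd (hM.2 w hw1 hcov.le) (by have hg := P.graded _ _ hcov; have hzd := hz.2.1; omega)
          · exact hz.2.2 w hw2 hcov
        · exact Or.inr ⟨Or.inl ht1, fun y hy hxy =>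
            hy.elim (fun h => htM y h hxy) (fun h => hM2.2 y h hxy)⟩
      · exact Or.inr ⟨Or.inl ht1, fun y hy hxy =>
          hy.elim (fun h => htM y h hxy) (fun h => absurd (hc2.mem_of_le hxy h) ht2)⟩

lemma pasteB3' (h1 : Sat P U₁) (h2 : Sat P U₂)
    (hW1 : U₁ ∩ U₂ = P.bd k true U₁) (hW2 : U₁ ∩ U₂ = P.bd k false U₂)
    {n : ℕ} (hn : n < k) (α : Bool) :
    P.bd n α (U₁ ∪ U₂) = P.bd n α U₂ := by
  rw [pasteB3 h1 h2 hW1 hW2 hn α, pasteD h1 h2 hW1 hW2 hn α]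

end Paste

section SatPaste

variable {P : OGP}

lemma sat_paste : ∀ (N : ℕ) (U₁ U₂ : Set P.carrier) (k : ℕ), P.sdim (U₁ ∪ U₂) ≤ N →
    Sat P U₁ → Sat P U₂ → U₁ ∩ U₂ = P.bd k true U₁ → U₁ ∩ U₂ = P.bd k false U₂ →
    Sat P (U₁ ∪ U₂) := by
  intro N
  induction N using Nat.strong_induction_on with
  | _ N IH =>
  intro U₁ U₂ k hsd h1 h2 hW1 hW2
  by_cases e1 : U₁ ∪ U₂ = U₁
  · rw [e1]; exact h1
  by_cases e2 : U₁ ∪ U₂ = U₂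
  · rw [e2]; exact h2
  have hcU : P.IsClosed (U₁ ∪ U₂) := h1.closed.union h2.closed
  have hmol : IsMolecule P (U₁ ∪ U₂) :=
    IsMolecule.paste U₁ U₂ k h1.mol h2.mol hW1 hW2 (fun h => e1 h.symm) (fun h => e2 h.symm)
  have hcond : ∀ (m : ℕ), k < m → ∀ (β : Bool),
      (P.bd m β U₁) ∩ (P.bd m β U₂) = P.bd k true (P.bd m β U₁) ∧
      (P.bd m β U₁) ∩ (P.bd m β U₂) = P.bd k false (P.bd m β U₂) := by
    intro m hm β
    have hint : (P.bd m β U₁) ∩ (P.bd m β U₂) = U₁ ∩ U₂ := by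
      apply subset_antisymm
      · exact Set.inter_subset_inter (OGP.bd_subset h1.closed) (OGP.bd_subset h2.closed)
      · intro x hx
        constructor
        · exact h1.bd_subset_bd hm true β (by rw [← hW1]; exact hx)
        · exact h2.bd_subset_bd hm false β (by rw [← hW2]; exact hx)
    constructor
    · rw [hint, hW1, h1.glob k m true β hm]
    · rw [hint, hW2, h2.glob k m false β hm]
  have hbdU : ∀ (m : ℕ) (β : Bool), m < k → P.bd m β (U₁ ∪ U₂) = P.bd m β U₁ :=
    fun m β hm => pasteB3 h1 h2 hW1 hW2 hm β
  have hbdUk : P.bd k true (U₁ ∪ U₂) = P.bd k true U₂ := pasteB2' h1 h2 hW1 hW2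
  have hbdUk' : P.bd k false (U₁ ∪ U₂) = P.bd k false U₁ := pasteB2neg h1 h2 hW1 hW2
  have hbdUg : ∀ (m : ℕ) (β : Bool), k < m →
      P.bd m β (U₁ ∪ U₂) = P.bd m β U₁ ∪ P.bd m β U₂ :=
    fun m β hm => pasteB1 h1 h2 hW1 hW2 hm β
  have child : ∀ (n : ℕ) (α : Bool), n < P.sdim (U₁ ∪ U₂) →
      Sat P (P.bd n α (U₁ ∪ U₂)) := by
    intro n α hn
    rcases lt_trichotomy n k with h | rfl | h
    · rw [hbdU n α h]; exact h1.bd_sat n α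
    · cases α
      · rw [hbdUk']; exact h1.bd_sat n false
      · rw [hbdUk]; exact h2.bd_sat n true
    · rw [hbdUg n α h]
      refine IH n (by omega) _ _ k ?_ (h1.bd_sat n α) (h2.bd_sat n α)
        (hcond n h α).1 (hcond n h α).2
      refine OGP.sdim_le fun x hx => ?_
      rcases hx with hx | hx <;> exact OGP.dim_le_of_mem_bd hx
  have glob : ∀ (n m : ℕ) (α β : Bool), n < m →
      P.bd n α (P.bd m β (U₁ ∪ U₂)) = P.bd n α (U₁ ∪ U₂) := by
    intro n m α β hnm
    rcases le_or_gt (P.sdim (U₁ ∪ U₂)) m with hm | hm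
    · rw [OGP.bd_eq_self hcU hm]
    rcases lt_trichotomy m k with hmk | rfl | hmk
    · rw [hbdU m β hmk, h1.glob n m α β hnm, ← hbdU n α (hnm.trans hmk)]
    · cases β
      · rw [hbdUk', h1.glob n m α false hnm, ← hbdU n α hnm]
      · rw [hbdUk, h2.glob n m α true hnm, ← pasteB3' h1 h2 hW1 hW2 hnm α]
    · have hX1 : Sat P (P.bd m β U₁) := h1.bd_sat m β
      have hX2 : Sat P (P.bd m β U₂) := h2.bd_sat m β
      have hc := hcond m hmk β
      rw [hbdUg m β hmk]
      rcases lt_trichotomy n k with h | rfl | h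
      · rw [pasteB3 hX1 hX2 hc.1 hc.2 h α, h1.glob n m α β hnm, ← hbdU n α h]
      · cases α
        · rw [pasteB2neg hX1 hX2 hc.1 hc.2, h1.glob n m false β hmk, ← hbdUk']
        · rw [pasteB2' hX1 hX2 hc.1 hc.2, h2.glob n m true β hmk, ← hbdUk]
      · rw [pasteB1 hX1 hX2 hc.1 hc.2 h α, h1.glob n m α β hnm, h2.glob n m α β hnm,
          ← hbdUg n α h]
  exact Sat.mk _ hmol child glob

end SatPaste

section Atom

variable {P : OGP}

lemma atom_M_empty {x : P.carrier} {m : ℕ} (hm : m < P.dim x) (α : Bool) :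
    P.bd m α (P.cl {x}) = P.cl (P.sb m α (P.cl {x})) :=
  OGP.bd_eq_cl_sb fun t ht =>
    ⟨x, OGP.self_mem_cl_singleton x, OGP.mem_cl_singleton.1 ht, hm⟩

lemma isClosed_atom_bd {x : P.carrier} {m : ℕ} (hm : m < P.dim x) (α : Bool) :
    P.IsClosed (P.bd m α (P.cl {x})) := by
  rw [atom_M_empty hm α]; exact OGP.isClosed_cl _

lemma sat_atom (hP : IsRegularDC P) (x : P.carrier)
    (IH : ∀ V : Set P.carrier, IsMolecule P V → P.sdim V < P.dim x → Sat P V) :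
    Sat P (P.cl {x}) := by
  have hmolx : IsMolecule P (P.cl {x}) :=
    IsMolecule.atom _ (OGP.isClosed_cl_singleton x)
      ⟨x, OGP.self_mem_cl_singleton x, fun y hy => OGP.mem_cl_singleton.1 hy⟩
  by_cases hd0 : P.dim x = 0
  · refine Sat.mk _ hmolx (fun n α hn => ?_) (fun n m α β hnm => ?_)
    · rw [OGP.sdim_cl_singleton, hd0] at hn; exact absurd hn (by omega)
    · rw [OGP.bd_eq_self (OGP.isClosed_cl_singleton x)
        (by rw [OGP.sdim_cl_singleton, hd0]; omega)]
  have hdpos : 0 < P.dim x := Nat.pos_of_ne_zero hd0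
  obtain ⟨hsph1, hsph2⟩ := hP.2 x
  have hVmol : ∀ β : Bool, IsMolecule P (P.bd (P.dim x - 1) β (P.cl {x})) :=
    fun β => (hP.1 x β).1
  have hVsat : ∀ β : Bool, Sat P (P.bd (P.dim x - 1) β (P.cl {x})) := fun β =>
    IH _ (hVmol β) (lt_of_le_of_lt OGP.sdim_bd_le (by omega))
  have haxiom : ∀ (γ β : Bool), 1 < P.dim x →
      P.bd (P.dim x - 2) γ (P.bd (P.dim x - 1) β (P.cl {x})) =
        P.bd (P.dim x - 2) γ (P.cl {x}) :=
    fun γ β h2 => (hP.1 x γ).2 h2 β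
  -- the descending chain of boundaries
  have Hchain : ∀ (i m : ℕ), m + i = P.dim x - 2 → 2 ≤ P.dim x → ∀ γ : Bool,
      P.bd m γ (P.cl {x}) = P.bd m γ (P.bd (P.dim x - 1) true (P.cl {x})) := by
    intro i
    induction i with
    | zero =>
      intro m hm h2 γ
      have hmeq : m = P.dim x - 2 := by omega
      subst hmeq
      exact (haxiom γ true h2).symm
    | succ i ih =>
      intro m hm h2 γ
      have Hm1 : ∀ δ : Bool, P.bd (m+1) δ (P.cl {x}) =
          P.bd (m+1) δ (P.bd (P.dim x - 1) true (P.cl {x})) :=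
        fun δ => ih (m+1) (by omega) h2 δ
      have hs := hsph1 (m+1) (by omega) (by omega)
      rw [Nat.add_sub_cancel] at hs
      have hVsat' : Sat P (P.bd (m+1) true (P.cl {x})) := by
        rw [Hm1 true]; exact (hVsat true).bd_sat (m+1) true
      have hclbd : P.IsClosed (P.bd m γ (P.cl {x})) :=
        isClosed_atom_bd (by omega) γ
      -- the inclusion `sb m γ (cl x) ⊆ sb m γ V`
      have hsub1 : P.sb m γ (P.cl {x}) ⊆ P.sb m γ (P.bd (m+1) true (P.cl {x})) := by
        rintro z hz
        have hzb : z ∈ P.bd m γ (P.cl {x}) := OGP.sb_subset_bd hz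
        have hzu : z ∈ P.bd m true (P.cl {x}) ∪ P.bd m false (P.cl {x}) := by
          cases γ
          · exact Or.inr hzb
          · exact Or.inl hzb
        rw [← hs] at hzu
        refine ⟨hzu.1, hz.2.1, fun w hw hcov => ?_⟩
        exact hz.2.2 w (OGP.bd_subset (OGP.isClosed_cl_singleton x) hw) hcov
      -- the reverse inclusion
      have hsub2 : P.sb m γ (P.bd (m+1) true (P.cl {x})) ⊆ P.bd m γ (P.cl {x}) := by
        rintro z hz
        have hzd := hz.2.1
        have hz1 : z ∈ P.bd (m+1) false (P.cl {x}) := by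
          rw [Hm1 false]
          refine (hVsat true).bd_subset_bd (show m < m+1 by omega) γ false ?_
          have hzb : z ∈ P.bd m γ (P.bd (m+1) true (P.cl {x})) := OGP.sb_subset_bd hz
          rw [Hm1 true] at hzb
          rw [(hVsat true).glob m (m+1) γ true (by omega)] at hzb
          exact hzb
        have hz2 : z ∈ P.bd m true (P.cl {x}) ∪ P.bd m false (P.cl {x}) := by
          rw [← hs]; exact ⟨hz.1, hz1⟩
        have hMfalse : ¬ (z ∈ P.cl {x} ∧ ∀ y ∈ P.cl {x}, z ≤ y → P.dim y ≤ m) := by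
          rintro ⟨hzx, hMz⟩
          have := hMz x (OGP.self_mem_cl_singleton x) (OGP.mem_cl_singleton.1 hzx)
          omega
        have hcontr : ∀ δ : Bool, z ∈ P.sb m δ (P.cl {x}) → δ ≠ γ → False := by
          intro δ hsb hne
          have hzV : z ∈ P.cl (P.sb (m+1) true (P.cl {x})) := by
            rw [← atom_M_empty (show m+1 < P.dim x by omega) true]
            exact hz.1
          obtain ⟨u, hu, hzu⟩ := hzV
          have hzltu : z < u := lt_of_le_of_ne hzu
            (fun h => by rw [h] at hzd; have := hu.2.1; omega)
          have hcov : z ⋖ u := OGP.covBy_of_lt_of_dim hzltu (by rw [hu.2.1, hzd])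
          have e1 : P.orient u z = γ := hz.2.2 u (OGP.sb_subset_bd hu) hcov
          have e2 : P.orient u z = δ := hsb.2.2 u hu.1 hcov
          rw [e1] at e2
          exact hne e2.symm
        have hfin : ∀ δ : Bool, z ∈ P.sb m δ (P.cl {x}) → z ∈ P.bd m γ (P.cl {x}) := by
          intro δ hsb
          by_cases hδγ : δ = γ
          · rw [hδγ] at hsb; exact OGP.sb_subset_bd hsb
          · exact (hcontr δ hsb hδγ).elim
        rcases hz2 with hzb | hzb
        · rcases OGP.mem_sb_of_mem_bd_of_dim hzb hzd with hsb | hM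
          · exact hfin true hsb
          · exact (hMfalse hM).elim
        · rcases OGP.mem_sb_of_mem_bd_of_dim hzb hzd with hsb | hM
          · exact hfin false hsb
          · exact (hMfalse hM).elim
      have hMV : P.bd m γ (P.bd (m+1) true (P.cl {x})) =
          P.cl (P.sb m γ (P.bd (m+1) true (P.cl {x}))) := by
        refine OGP.bd_eq_cl_sb (fun t ht => ?_)
        have ht' : t ∈ P.cl (P.sb (m+1) true (P.cl {x})) := by
          rw [← atom_M_empty (show m+1 < P.dim x by omega) true]; exact ht
        obtain ⟨u, hu, htu⟩ := ht'
        exact ⟨u, OGP.sb_subset_bd hu, htu, by rw [hu.2.1]; omega⟩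
      have step : P.bd m γ (P.cl {x}) = P.bd m γ (P.bd (m+1) true (P.cl {x})) := by
        apply subset_antisymm
        · rw [atom_M_empty (show m < P.dim x by omega) γ]
          intro t ht
          obtain ⟨z, hz, htz⟩ := ht
          exact Or.inl ⟨z, hsub1 hz, htz⟩
        · rw [hMV]
          rintro t ⟨z, hz, htz⟩
          exact hclbd.mem_of_le htz (hsub2 hz)
      calc P.bd m γ (P.cl {x})
          = P.bd m γ (P.bd (m+1) true (P.cl {x})) := step
        _ = P.bd m γ (P.bd (m+1) true (P.bd (P.dim x - 1) true (P.cl {x}))) := by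
            rw [← Hm1 true]
        _ = P.bd m γ (P.bd (P.dim x - 1) true (P.cl {x})) :=
            (hVsat true).glob m (m+1) γ true (by omega)
  have H : ∀ (m : ℕ), m < P.dim x - 1 → ∀ γ : Bool,
      P.bd m γ (P.cl {x}) = P.bd m γ (P.bd (P.dim x - 1) true (P.cl {x})) :=
    fun m hm γ => Hchain (P.dim x - 2 - m) m (by omega) (by omega) γ
  have H' : ∀ (m : ℕ), m < P.dim x - 1 → ∀ γ : Bool,
      P.bd m γ (P.bd (P.dim x - 1) false (P.cl {x})) = P.bd m γ (P.cl {x}) := by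
    intro m hm γ
    have h2 : 2 ≤ P.dim x := by omega
    by_cases hm2 : m = P.dim x - 2
    · subst hm2; exact haxiom γ false h2
    · have hmlt : m < P.dim x - 2 := by omega
      calc P.bd m γ (P.bd (P.dim x - 1) false (P.cl {x}))
          = P.bd m γ (P.bd (P.dim x - 2) true (P.bd (P.dim x - 1) false (P.cl {x}))) :=
            ((hVsat false).glob m (P.dim x - 2) γ true hmlt).symm
        _ = P.bd m γ (P.bd (P.dim x - 2) true (P.cl {x})) := by rw [haxiom true false h2]
        _ = P.bd m γ (P.bd (P.dim x - 2) true (P.bd (P.dim x - 1) true (P.cl {x}))) := by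
            rw [← H (P.dim x - 2) (by omega) true]
        _ = P.bd m γ (P.bd (P.dim x - 1) true (P.cl {x})) :=
            (hVsat true).glob m (P.dim x - 2) γ true hmlt
        _ = P.bd m γ (P.cl {x}) := (H m hm γ).symm
  have hglob : ∀ (n m : ℕ) (α β : Bool), n < m →
      P.bd n α (P.bd m β (P.cl {x})) = P.bd n α (P.cl {x}) := by
    intro n m α β hnm
    rcases le_or_gt (P.dim x) m with hm | hm
    · rw [OGP.bd_eq_self (OGP.isClosed_cl_singleton x)
        (by rw [OGP.sdim_cl_singleton]; exact hm)]
    by_cases hmtop : m = P.dim x - 1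
    · subst hmtop
      cases β
      · exact H' n hnm α
      · exact (H n hnm α).symm
    · have hmlt : m < P.dim x - 1 := by omega
      calc P.bd n α (P.bd m β (P.cl {x}))
          = P.bd n α (P.bd m β (P.bd (P.dim x - 1) true (P.cl {x}))) := by rw [← H m hmlt β]
        _ = P.bd n α (P.bd (P.dim x - 1) true (P.cl {x})) :=
            (hVsat true).glob n m α β hnm
        _ = P.bd n α (P.cl {x}) := (H n (by omega) α).symm
  have hchild : ∀ (n : ℕ) (α : Bool), n < P.sdim (P.cl {x}) → Sat P (P.bd n α (P.cl {x})) := by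
    intro n α hn
    rw [OGP.sdim_cl_singleton] at hn
    by_cases htop : n = P.dim x - 1
    · subst htop; exact hVsat α
    · have hlt : n < P.dim x - 1 := by omega
      rw [H n hlt α]
      exact (hVsat true).bd_sat n α
  exact Sat.mk _ hmolx hchild hglob

lemma sat_of_molecule_aux (hP : IsRegularDC P) :
    ∀ (N : ℕ) (U : Set P.carrier), IsMolecule P U → P.sdim U ≤ N → Sat P U := by
  intro N
  induction N using Nat.strong_induction_on with
  | _ N IH =>
  intro U hU
  induction hU with
  | atom U hcl hg =>
    intro hsd
    obtain ⟨x, hxU, hx⟩ := hg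
    have hUx : U = P.cl {x} := by
      apply subset_antisymm
      · exact fun y hy => OGP.mem_cl_singleton.2 (hx y hy)
      · exact fun y hy => hcl.mem_of_le (OGP.mem_cl_singleton.1 hy) hxU
    rw [hUx] at hsd ⊢
    rw [OGP.sdim_cl_singleton] at hsd
    exact sat_atom hP x (fun V hV hVd => IH (P.sdim V) (by omega) V hV le_rfl)
  | paste U₁ U₂ k m1 m2 hW1 hW2 hp1 hp2 ih1 ih2 =>
    intro hsd
    exact sat_paste N U₁ U₂ k hsd
      (ih1 ((OGP.sdim_mono Set.subset_union_left).trans hsd))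
      (ih2 ((OGP.sdim_mono Set.subset_union_right).trans hsd)) hW1 hW2

lemma IsMolecule.sat {P : OGP} {U : Set P.carrier} (hP : IsRegularDC P)
    (h : IsMolecule P U) : Sat P U :=
  sat_of_molecule_aux hP (P.sdim U) U h le_rfl

end Atom

section Functor

variable {P Q : OGP} {C : Set Q.carrier → Prop}

lemma CFun.map_empty (f : CFun P Q C) : f.toFun ∅ = ∅ := by
  have h := f.map_unions ∅ (fun U hU => absurd hU (Set.notMem_empty U))
  simpa using h

lemma CFun.map_union₂ (f : CFun P Q C) {A B : Set P.carrier}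
    (hA : P.IsClosed A) (hB : P.IsClosed B) :
    f.toFun (A ∪ B) = f.toFun A ∪ f.toFun B := by
  have h := f.map_unions {A, B} (by rintro U (rfl | rfl); exacts [hA, hB])
  simpa [Set.image_pair] using h

lemma cfun_key (f : CFun P Q C) (hP : IsRegularDC P) (hQ : IsRegularDC Q) :
    ∀ U : Set P.carrier, IsMolecule P U →
      IsMolecule Q (f.toFun U) ∧ Q.sdim (f.toFun U) = P.sdim U ∧
      ∀ (n : ℕ) (α : Bool), Q.bd n α (f.toFun U) = f.toFun (P.bd n α U) := by
  intro U hU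
  induction hU with
  | atom U hcl hg =>
    obtain ⟨x, hxU, hx⟩ := hg
    have hUx : U = P.cl {x} := subset_antisymm
      (fun y hy => OGP.mem_cl_singleton.2 (hx y hy))
      (fun y hy => hcl.mem_of_le (OGP.mem_cl_singleton.1 hy) hxU)
    subst hUx
    have hmolP : IsMolecule P (P.cl {x}) :=
      IsMolecule.atom _ (OGP.isClosed_cl_singleton x)
        ⟨x, OGP.self_mem_cl_singleton x, fun y hy => OGP.mem_cl_singleton.1 hy⟩
    have hsatP : Sat P (P.cl {x}) := hmolP.sat hP
    have hbd : ∀ (n : ℕ) (α : Bool),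
        Q.bd n α (f.toFun (P.cl {x})) = f.toFun (P.bd n α (P.cl {x})) :=
      fun n α => f.map_bd x n α
    have hmolQ : IsMolecule Q (f.toFun (P.cl {x})) := (f.atom_mol x).1
    refine ⟨hmolQ, ?_, hbd⟩
    have hQne : (f.toFun (P.cl {x})).Nonempty := hmolQ.nonempty
    have hQcl : Q.IsClosed (f.toFun (P.cl {x})) := hmolQ.closed
    rw [OGP.sdim_cl_singleton]
    have hle : Q.sdim (f.toFun (P.cl {x})) ≤ P.dim x := by
      have h1 : Q.bd (P.dim x) true (f.toFun (P.cl {x})) = f.toFun (P.cl {x}) := by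
        rw [hbd, OGP.bd_eq_self (OGP.isClosed_cl_singleton x)
          (le_of_eq (OGP.sdim_cl_singleton x))]
      calc Q.sdim (f.toFun (P.cl {x}))
          = Q.sdim (Q.bd (P.dim x) true (f.toFun (P.cl {x}))) := by rw [h1]
        _ ≤ P.dim x := OGP.sdim_bd_le
    refine le_antisymm hle ?_
    by_contra hlt
    push_neg at hlt
    set n := Q.sdim (f.toFun (P.cl {x})) with hn
    have hfU : ∀ α : Bool, f.toFun (P.bd n α (P.cl {x})) = f.toFun (P.cl {x}) := by
      intro α
      rw [← hbd]
      exact OGP.bd_eq_self hQcl le_rfl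
    have hinter : f.toFun (P.cl {x}) =
        f.toFun (P.bd n true (P.cl {x}) ∩ P.bd n false (P.cl {x})) := by
      rw [f.map_inter _ _ (hsatP.bd_closed n true) (hsatP.bd_closed n false), hfU true,
        hfU false, Set.inter_self]
    obtain ⟨hsph1, hsph2⟩ := hP.2 x
    rcases Nat.eq_zero_or_pos n with hn0 | hnpos
    · rw [hn0] at hinter
      rw [hsph2 (by omega)] at hinter
      rw [f.map_empty] at hinter
      exact hQne.ne_empty hinter
    · rw [hsph1 n hnpos (by omega)] at hinter
      rw [f.map_union₂ (hsatP.bd_closed (n-1) true) (hsatP.bd_closed (n-1) false)] at hinter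
      rw [← hbd, ← hbd] at hinter
      obtain ⟨y, hy, hyd⟩ := OGP.exists_dim_eq_sdim hQne
      rw [hinter] at hy
      have hylt : Q.dim y ≤ n - 1 := by
        rcases hy with hy | hy <;> exact OGP.dim_le_of_mem_bd hy
      rw [← hn] at hyd
      omega
  | paste U₁ U₂ k m1 m2 hW1 hW2 hp1 hp2 ih1 ih2 =>
    obtain ⟨hm1, hs1, hb1⟩ := ih1
    obtain ⟨hm2, hs2, hb2⟩ := ih2
    have hS1P : Sat P U₁ := m1.sat hP
    have hS2P : Sat P U₂ := m2.sat hP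
    have hS1Q : Sat Q (f.toFun U₁) := hm1.sat hQ
    have hS2Q : Sat Q (f.toFun U₂) := hm2.sat hQ
    have hfu : f.toFun (U₁ ∪ U₂) = f.toFun U₁ ∪ f.toFun U₂ :=
      f.map_union₂ hS1P.closed hS2P.closed
    have hfW1 : f.toFun U₁ ∩ f.toFun U₂ = Q.bd k true (f.toFun U₁) := by
      rw [← f.map_inter _ _ hS1P.closed hS2P.closed, hW1]
      exact (hb1 k true).symm
    have hfW2 : f.toFun U₁ ∩ f.toFun U₂ = Q.bd k false (f.toFun U₂) := by
      rw [← f.map_inter _ _ hS1P.closed hS2P.closed, hW2]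
      exact (hb2 k false).symm
    have hbU : ∀ (n : ℕ) (α : Bool),
        Q.bd n α (f.toFun (U₁ ∪ U₂)) = f.toFun (P.bd n α (U₁ ∪ U₂)) := by
      intro n α
      rw [hfu]
      rcases lt_trichotomy n k with h | rfl | h
      · rw [pasteB3 hS1Q hS2Q hfW1 hfW2 h α, hb1 n α, ← pasteB3 hS1P hS2P hW1 hW2 h α]
      · cases α
        · rw [pasteB2neg hS1Q hS2Q hfW1 hfW2, hb1 n false,
            ← pasteB2neg hS1P hS2P hW1 hW2]
        · rw [pasteB2' hS1Q hS2Q hfW1 hfW2, hb2 n true, ← pasteB2' hS1P hS2P hW1 hW2]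
      · rw [pasteB1 hS1Q hS2Q hfW1 hfW2 h α, hb1 n α, hb2 n α,
          ← f.map_union₂ (hS1P.bd_closed n α) (hS2P.bd_closed n α),
          ← pasteB1 hS1P hS2P hW1 hW2 h α]
    have hmolU : IsMolecule Q (f.toFun (U₁ ∪ U₂)) := by
      rw [hfu]
      by_cases e1 : f.toFun U₁ ∪ f.toFun U₂ = f.toFun U₁
      · rw [e1]; exact hm1
      by_cases e2 : f.toFun U₁ ∪ f.toFun U₂ = f.toFun U₂
      · rw [e2]; exact hm2
      exact IsMolecule.paste _ _ k hm1 hm2 hfW1 hfW2 (fun h => e1 h.symm) (fun h => e2 h.symm)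
    refine ⟨hmolU, ?_, hbU⟩
    rw [hfu, OGP.sdim_union, OGP.sdim_union, hs1, hs2]

end Functor

/-- a `C`-functor sends molecules to molecules of the same
dimension, commutes with boundaries, and preserves pasting decompositions. -/
theorem stmt15 (P Q : OGP) (hP : IsRegularDC P) (hQ : IsRegularDC Q)
    (C : Set Q.carrier → Prop) (f : CFun P Q C)
    (U : Set P.carrier) (hU : IsMolecule P U) :
    IsMolecule Q (f.toFun U) ∧
    Q.sdim (f.toFun U) = P.sdim U ∧
    (∀ α : Bool,
      Q.bd (P.sdim U - 1) α (f.toFun U) = f.toFun (P.bd (P.sdim U - 1) α U)) ∧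
    (∀ (U₁ U₂ : Set P.carrier) (k : ℕ),
      IsMolecule P U₁ → IsMolecule P U₂ → U = U₁ ∪ U₂ →
      U₁ ∩ U₂ = P.bd k true U₁ → U₁ ∩ U₂ = P.bd k false U₂ →
      f.toFun U = f.toFun U₁ ∪ f.toFun U₂ ∧
      f.toFun U₁ ∩ f.toFun U₂ = Q.bd k true (f.toFun U₁) ∧
      f.toFun U₁ ∩ f.toFun U₂ = Q.bd k false (f.toFun U₂)) := by
  obtain ⟨K1, K2, K3⟩ := cfun_key f hP hQ U hU
  refine ⟨K1, K2, fun α => K3 _ α, ?_⟩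
  intro U₁ U₂ k m1 m2 hUeq hk1 hk2
  obtain ⟨L1, L2, L3⟩ := cfun_key f hP hQ U₁ m1
  obtain ⟨R1, R2, R3⟩ := cfun_key f hP hQ U₂ m2
  have hc1 := m1.closed
  have hc2 := m2.closed
  refine ⟨by rw [hUeq, f.map_union₂ hc1 hc2], ?_, ?_⟩
  · rw [← f.map_inter _ _ hc1 hc2, hk1]; exact (L3 k true).symm
  · rw [← f.map_inter _ _ hc1 hc2, hk2]; exact (R3 k false).symm
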